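/- Let d ≥ 1, let s₁,…,s_d > 0 be real constants, and define h : (0,∞)^d → ℝ by h(λ) = (λ₁/s₁ + ⋯ + λ_d/s_d)^(−(d/2−1)). Then for every λ ∈ (0,∞)^d: (Δ̊ h)(λ)/h(λ) − (1/2)·Σᵢ sᵢ λᵢ · ( ∂h/∂λᵢ(λ) / h(λ) )² = −(1/2)·(d/2 − 1)² · (λ₁/s₁ + ⋯ + λ_d/s_d)⁻¹, where Δ̊ is the Poisson predictive Laplacian. Equivalently, since Δ̊ h = 0, one has (1/2)·Σᵢ sᵢ λᵢ (∂ᵢ h / h)² = (1/2)(d/2−1)²(Σⱼ λⱼ/sⱼ)⁻¹. -/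

import Mathlib

/-- The `i`-th partial derivative of `h : (Fin d → ℝ) → ℝ`. -/
noncomputable def pderiv1 {d : ℕ} (i : Fin d) (h : (Fin d → ℝ) → ℝ) (x : Fin d → ℝ) : ℝ :=
  fderiv ℝ h x (Pi.single i 1)

/-- The second partial derivative `∂ᵢ∂ᵢ h`. -/
noncomputable def pderiv2 {d : ℕ} (i j : Fin d) (h : (Fin d → ℝ) → ℝ) (x : Fin d → ℝ) : ℝ :=
  pderiv1 i (pderiv1 j h) x

/-- The Poisson predictive Laplacian
`(Δ̊ f)(λ) = Σᵢ sᵢ (λᵢ ∂²f/∂λᵢ² + (1/2) ∂f/∂λᵢ)`. -/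
noncomputable def poissonLap {d : ℕ} (s : Fin d → ℝ) (f : (Fin d → ℝ) → ℝ)
    (l : Fin d → ℝ) : ℝ :=
  ∑ i, s i * (l i * pderiv2 i i f l + (1 / 2) * pderiv1 i f l)

open Real Filter

noncomputable def myL {d : ℕ} (s : Fin d → ℝ) : (Fin d → ℝ) →L[ℝ] ℝ :=
  ∑ j, (s j)⁻¹ • (ContinuousLinearMap.proj j : (Fin d → ℝ) →L[ℝ] ℝ)

lemma myL_apply {d : ℕ} (s : Fin d → ℝ) (i : Fin d) : myL s (Pi.single i 1) = (s i)⁻¹ := by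
  simp [myL, ContinuousLinearMap.sum_apply, Pi.single_apply, Finset.sum_ite_eq']

lemma hasFDerivAt_u {d : ℕ} (s : Fin d → ℝ) (x : Fin d → ℝ) :
    HasFDerivAt (fun m : Fin d → ℝ => ∑ j, m j / s j) (myL s) x := by
  have h : ∀ j : Fin d, HasFDerivAt (fun m : Fin d → ℝ => m j / s j)
      ((s j)⁻¹ • (ContinuousLinearMap.proj j : (Fin d → ℝ) →L[ℝ] ℝ)) x := by
    intro j
    simpa [div_eq_mul_inv] using
      ((ContinuousLinearMap.proj j : (Fin d → ℝ) →L[ℝ] ℝ).hasFDerivAt (x := x)).mul_const (s j)⁻¹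
  exact HasFDerivAt.fun_sum (fun j _ => h j)

lemma hasFDerivAt_h {d : ℕ} (s : Fin d → ℝ) (p : ℝ) (x : Fin d → ℝ)
    (hx : (∑ j, x j / s j) ≠ 0) :
    HasFDerivAt (fun m : Fin d → ℝ => (∑ j, m j / s j) ^ p)
      ((p * (∑ j, x j / s j) ^ (p - 1)) • myL s) x :=
  (hasFDerivAt_u s x).rpow_const (Or.inl hx)

lemma pderiv1_h {d : ℕ} (s : Fin d → ℝ) (p : ℝ) (i : Fin d) (x : Fin d → ℝ)
    (hx : (∑ j, x j / s j) ≠ 0) :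
    pderiv1 i (fun m : Fin d → ℝ => (∑ j, m j / s j) ^ p) x
      = p * (∑ j, x j / s j) ^ (p - 1) / s i := by
  rw [pderiv1, (hasFDerivAt_h s p x hx).fderiv]
  simp [myL_apply, div_eq_mul_inv]

lemma pderiv2_h {d : ℕ} (s : Fin d → ℝ) (p : ℝ) (i : Fin d) (l : Fin d → ℝ)
    (hl : 0 < ∑ j, l j / s j) :
    pderiv2 i i (fun m : Fin d → ℝ => (∑ j, m j / s j) ^ p) l
      = p * (p - 1) * (∑ j, l j / s j) ^ (p - 2) / s i / s i := by
  have hcont : Continuous (fun x : Fin d → ℝ => ∑ j, x j / s j) := by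
    exact continuous_finset_sum _ fun j _ => (continuous_apply j).div_const _
  have hopen : IsOpen {x : Fin d → ℝ | 0 < ∑ j, x j / s j} :=
    isOpen_lt continuous_const hcont
  have hev : (fun x => pderiv1 i (fun m : Fin d → ℝ => (∑ j, m j / s j) ^ p) x)
      =ᶠ[nhds l] fun x => p * (∑ j, x j / s j) ^ (p - 1) / s i :=
    Filter.eventuallyEq_of_mem (hopen.mem_nhds hl) (fun x hx => pderiv1_h s p i x (ne_of_gt hx))
  have hg : HasFDerivAt (fun x : Fin d → ℝ => p * (∑ j, x j / s j) ^ (p - 1) / s i)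
      ((s i)⁻¹ • (p • (((p - 1) * (∑ j, l j / s j) ^ (p - 1 - 1)) • myL s))) l := by
    simpa [div_eq_mul_inv] using
      (((hasFDerivAt_h s (p - 1) l hl.ne').const_mul p).mul_const (s i)⁻¹)
  rw [pderiv2, pderiv1, hev.fderiv_eq, hg.fderiv]
  have : p - 1 - 1 = p - 2 := by ring
  rw [this]
  simp [myL_apply, div_eq_mul_inv]
  ring

theorem poisson_asymptotic_risk_difference
    (d : ℕ) (hd : 1 ≤ d) (s : Fin d → ℝ) (hs : ∀ i, 0 < s i) :
    ∀ l : Fin d → ℝ, (∀ i, 0 < l i) →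
      (poissonLap s (fun m => (∑ j, m j / s j) ^ (-((d : ℝ) / 2 - 1))) l
          / (∑ j, l j / s j) ^ (-((d : ℝ) / 2 - 1))
        - (1 / 2) * ∑ i, s i * l i *
            (pderiv1 i (fun m => (∑ j, m j / s j) ^ (-((d : ℝ) / 2 - 1))) l
              / (∑ j, l j / s j) ^ (-((d : ℝ) / 2 - 1))) ^ 2
        = -(1 / 2) * ((d : ℝ) / 2 - 1) ^ 2 * (∑ j, l j / s j)⁻¹)
      ∧ ((1 / 2) * ∑ i, s i * l i *
            (pderiv1 i (fun m => (∑ j, m j / s j) ^ (-((d : ℝ) / 2 - 1))) l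
              / (∑ j, l j / s j) ^ (-((d : ℝ) / 2 - 1))) ^ 2
        = (1 / 2) * ((d : ℝ) / 2 - 1) ^ 2 * (∑ j, l j / s j)⁻¹) := by
  intro l hl
  haveI : Nonempty (Fin d) := Fin.pos_iff_nonempty.mp (by omega)
  set p : ℝ := -((d : ℝ) / 2 - 1) with hp
  set U : ℝ := ∑ j, l j / s j with hUdef
  have hU : 0 < U :=
    Finset.sum_pos (fun i _ => div_pos (hl i) (hs i)) Finset.univ_nonempty
  have hUp : U ^ p ≠ 0 := (Real.rpow_pos_of_pos hU p).ne'
  have e1 : U ^ (p - 1) = U ^ (p - 2) * U := by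
    rw [show p - 1 = p - 2 + 1 by ring, Real.rpow_add_one hU.ne']
  have e2 : U ^ (p - 1) = U ^ p / U := by
    rw [Real.rpow_sub hU, Real.rpow_one]
  have hd2 : (d : ℝ) = 2 * (1 - p) := by rw [hp]; ring
  -- second part
  have hS : (∑ i, s i * l i *
        (pderiv1 i (fun m => (∑ j, m j / s j) ^ p) l / U ^ p) ^ 2)
      = U * (p ^ 2 / U ^ 2) := by
    have step : ∀ i : Fin d, s i * l i *
          (pderiv1 i (fun m => (∑ j, m j / s j) ^ p) l / U ^ p) ^ 2
        = (l i / s i) * (p ^ 2 / U ^ 2) := by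
      intro i
      rw [pderiv1_h s p i l hU.ne', e2]
      generalize hA : U ^ p = A at hUp ⊢
      field_simp [hUp, hU.ne', (hs i).ne']
    rw [Finset.sum_congr rfl (fun i _ => step i), ← Finset.sum_mul, ← hUdef]
  have hsecond : (1 / 2) * (∑ i, s i * l i *
        (pderiv1 i (fun m => (∑ j, m j / s j) ^ p) l / U ^ p) ^ 2)
      = (1 / 2) * ((d : ℝ) / 2 - 1) ^ 2 * U⁻¹ := by
    rw [hS]
    have : ((d : ℝ) / 2 - 1) ^ 2 = p ^ 2 := by rw [hp]; ring
    rw [this]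
    field_simp
  -- Laplacian is zero
  have hlap : poissonLap s (fun m => (∑ j, m j / s j) ^ p) l = 0 := by
    rw [poissonLap]
    have step : ∀ i : Fin d, s i * (l i * pderiv2 i i (fun m => (∑ j, m j / s j) ^ p) l
          + (1 / 2) * pderiv1 i (fun m => (∑ j, m j / s j) ^ p) l)
        = (l i / s i) * (p * (p - 1) * U ^ (p - 2)) + (1 / 2) * (p * U ^ (p - 1)) := by
      intro i
      rw [pderiv1_h s p i l hU.ne', pderiv2_h s p i l hU]
      generalize U ^ (p - 2) = B
      generalize U ^ (p - 1) = C
      field_simp [(hs i).ne']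
    rw [Finset.sum_congr rfl (fun i _ => step i), Finset.sum_add_distrib, ← Finset.sum_mul,
      Finset.sum_const, Finset.card_univ, Fintype.card_fin, nsmul_eq_mul, ← hUdef, e1, hd2]
    generalize U ^ (p - 2) = B
    ring
  refine ⟨?_, hsecond⟩
  rw [hlap, zero_div, hsecond]
  ring
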